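/- For q-series, the operator θF = q·dF/dq satisfies the identity 3·θE₄ = E₂·E₄ − E₆, where E₂(q) = 1 − 24∑_{n≥1} σ₁(n)qⁿ, E₄(q) = 1 + 240∑_{n≥1} σ₃(n)qⁿ, E₆(q) = 1 − 504∑_{n≥1} σ₅(n)qⁿ as formal power series. -/

import Mathlib

/-- Sum of the `r`-th powers of the positive divisors of `n`, as a rational. -/
noncomputable def sigmaQ (r n : ℕ) : ℚ := ∑ d ∈ n.divisors, (d : ℚ) ^ r

/-- The Eisenstein series `E₂ = 1 - 24 ∑ σ₁(n) qⁿ` as a formal power series. -/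
noncomputable def E2 : PowerSeries ℚ :=
  PowerSeries.mk fun n => if n = 0 then 1 else -24 * sigmaQ 1 n

/-- The Eisenstein series `E₄ = 1 + 240 ∑ σ₃(n) qⁿ` as a formal power series. -/
noncomputable def E4 : PowerSeries ℚ :=
  PowerSeries.mk fun n => if n = 0 then 1 else 240 * sigmaQ 3 n

/-- The Eisenstein series `E₆ = 1 - 504 ∑ σ₅(n) qⁿ` as a formal power series. -/
noncomputable def E6 : PowerSeries ℚ :=
  PowerSeries.mk fun n => if n = 0 then 1 else -504 * sigmaQ 5 n

/-- The operator `θF = q·dF/dq`, sending `∑ aₙ qⁿ` to `∑ n aₙ qⁿ`. -/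
noncomputable def theta (F : PowerSeries ℚ) : PowerSeries ℚ :=
  PowerSeries.mk fun n => (n : ℚ) * PowerSeries.coeff n F

def quad (n : ℕ) : Finset (ℕ × ℕ × ℕ × ℕ) :=
  ((Finset.range (n+1)) ×ˢ (Finset.range (n+1)) ×ˢ (Finset.range (n+1)) ×ˢ (Finset.range (n+1))).filter
    fun q => 0 < q.1 ∧ 0 < q.2.1 ∧ 0 < q.2.2.1 ∧ 0 < q.2.2.2 ∧ q.1 * q.2.2.1 + q.2.1 * q.2.2.2 = n

lemma mem_quad {n a b x y : ℕ} :
    (a, b, x, y) ∈ quad n ↔ 0 < a ∧ 0 < b ∧ 0 < x ∧ 0 < y ∧ a * x + b * y = n := by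
  simp only [quad, Finset.mem_filter, Finset.mem_product, Finset.mem_range]
  constructor
  · rintro ⟨-, h⟩; exact h
  · rintro ⟨ha, hb, hx, hy, h⟩
    refine ⟨⟨?_, ?_, ?_, ?_⟩, ha, hb, hx, hy, h⟩
    · exact Nat.lt_succ_of_le (le_trans (Nat.le_mul_of_pos_right a hx) (Nat.le.intro h))
    · exact Nat.lt_succ_of_le (le_trans (Nat.le_mul_of_pos_right b hy)
        (Nat.le.intro (by rw [Nat.add_comm] at h; exact h)))
    · exact Nat.lt_succ_of_le (le_trans (Nat.le_mul_of_pos_left x ha) (Nat.le.intro h))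
    · exact Nat.lt_succ_of_le (le_trans (Nat.le_mul_of_pos_left y hb)
        (Nat.le.intro (by rw [Nat.add_comm] at h; exact h)))

/-- B1: reflect the region a > b onto a < b by swapping. -/
lemma sum_quad_gt (n : ℕ) (g : ℕ → ℕ → ℚ) :
    ∑ q ∈ (quad n).filter (fun q => q.2.1 < q.1), g q.1 q.2.1
      = ∑ q ∈ (quad n).filter (fun q => q.1 < q.2.1), g q.2.1 q.1 := by
  apply Finset.sum_nbij' (fun q => (q.2.1, q.1, q.2.2.2, q.2.2.1))
    (fun q => (q.2.1, q.1, q.2.2.2, q.2.2.1))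
  · rintro ⟨a, b, x, y⟩ hq
    simp only [Finset.mem_filter] at hq ⊢
    obtain ⟨hq, hab⟩ := hq
    rw [mem_quad] at hq ⊢
    exact ⟨⟨hq.2.1, hq.1, hq.2.2.2.1, hq.2.2.1, by rw [Nat.add_comm]; exact hq.2.2.2.2⟩, hab⟩
  · rintro ⟨a, b, x, y⟩ hq
    simp only [Finset.mem_filter] at hq ⊢
    obtain ⟨hq, hab⟩ := hq
    rw [mem_quad] at hq ⊢
    exact ⟨⟨hq.2.1, hq.1, hq.2.2.2.1, hq.2.2.1, by rw [Nat.add_comm]; exact hq.2.2.2.2⟩, hab⟩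
  · rintro ⟨a, b, x, y⟩ _; rfl
  · rintro ⟨a, b, x, y⟩ _; rfl
  · rintro ⟨a, b, x, y⟩ _; rfl

/-- B2 (engine): region x > y maps onto region a < b. -/
lemma sum_quad_engine (n : ℕ) (g : ℕ → ℕ → ℚ) :
    ∑ q ∈ (quad n).filter (fun q => q.2.2.2 < q.2.2.1), g q.1 q.2.1
      = ∑ q ∈ (quad n).filter (fun q => q.1 < q.2.1), g q.1 (q.2.1 - q.1) := by
  apply Finset.sum_nbij' (fun q => (q.1, q.1 + q.2.1, q.2.2.1 - q.2.2.2, q.2.2.2))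
    (fun q => (q.1, q.2.1 - q.1, q.2.2.1 + q.2.2.2, q.2.2.2))
  · rintro ⟨a, b, x, y⟩ hq
    simp only [Finset.mem_filter] at hq ⊢
    obtain ⟨hq, hxy⟩ := hq
    rw [mem_quad] at hq ⊢
    obtain ⟨ha, hb, hx, hy, h⟩ := hq
    obtain ⟨k, rfl⟩ : ∃ k, x = y + (k + 1) := ⟨x - y - 1, by omega⟩
    refine ⟨⟨ha, by omega, by omega, hy, ?_⟩, by omega⟩
    have : a * (y + (k + 1) - y) = a * (k+1) := by rw [Nat.add_sub_cancel_left]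
    rw [this, ← h]; ring
  · rintro ⟨a, b, x, y⟩ hq
    simp only [Finset.mem_filter] at hq ⊢
    obtain ⟨hq, hab⟩ := hq
    rw [mem_quad] at hq ⊢
    obtain ⟨ha, hb, hx, hy, h⟩ := hq
    obtain ⟨k, rfl⟩ : ∃ k, b = a + (k + 1) := ⟨b - a - 1, by omega⟩
    refine ⟨⟨ha, by omega, by omega, hy, ?_⟩, by omega⟩
    have : a + (k + 1) - a = k + 1 := by omega
    rw [this, ← h]; ring
  · rintro ⟨a, b, x, y⟩ hq
    simp only [Finset.mem_filter, mem_quad] at hq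
    simp only [Prod.mk.injEq, and_true, true_and]
    omega
  · rintro ⟨a, b, x, y⟩ hq
    simp only [Finset.mem_filter, mem_quad] at hq
    simp only [Prod.mk.injEq, and_true, true_and]
    omega
  · rintro ⟨a, b, x, y⟩ hq
    simp only
    rw [Nat.add_sub_cancel_left]

/-- B3: region x < y maps onto region a < b with values g (b-a) a. -/
lemma sum_quad_lt_xy (n : ℕ) (g : ℕ → ℕ → ℚ) :
    ∑ q ∈ (quad n).filter (fun q => q.2.2.1 < q.2.2.2), g q.1 q.2.1
      = ∑ q ∈ (quad n).filter (fun q => q.1 < q.2.1), g (q.2.1 - q.1) q.1 := by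
  apply Finset.sum_nbij' (fun q => (q.2.1, q.1 + q.2.1, q.2.2.2 - q.2.2.1, q.2.2.1))
    (fun q => (q.2.1 - q.1, q.1, q.2.2.2, q.2.2.1 + q.2.2.2))
  · rintro ⟨a, b, x, y⟩ hq
    simp only [Finset.mem_filter] at hq ⊢
    obtain ⟨hq, hxy⟩ := hq
    rw [mem_quad] at hq ⊢
    obtain ⟨ha, hb, hx, hy, h⟩ := hq
    obtain ⟨k, rfl⟩ : ∃ k, y = x + (k + 1) := ⟨y - x - 1, by omega⟩
    refine ⟨⟨hb, by omega, by omega, hx, ?_⟩, by omega⟩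
    have : x + (k + 1) - x = k + 1 := by omega
    rw [this, ← h]; ring
  · rintro ⟨a, b, x, y⟩ hq
    simp only [Finset.mem_filter] at hq ⊢
    obtain ⟨hq, hab⟩ := hq
    rw [mem_quad] at hq ⊢
    obtain ⟨ha, hb, hx, hy, h⟩ := hq
    obtain ⟨k, rfl⟩ : ∃ k, b = a + (k + 1) := ⟨b - a - 1, by omega⟩
    refine ⟨⟨by omega, ha, hy, by omega, ?_⟩, by omega⟩
    have : a + (k + 1) - a = k + 1 := by omega
    rw [this, ← h]; ring
  · rintro ⟨a, b, x, y⟩ hq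
    simp only [Finset.mem_filter, mem_quad] at hq
    simp only [Prod.mk.injEq, and_true, true_and]
    omega
  · rintro ⟨a, b, x, y⟩ hq
    simp only [Finset.mem_filter, mem_quad] at hq
    simp only [Prod.mk.injEq, and_true, true_and]
    omega
  · rintro ⟨a, b, x, y⟩ hq
    simp only
    rw [Nat.add_sub_cancel_right]

/-- D1: diagonal a = b, summed as divisors. -/
lemma sum_quad_diag_ab (n : ℕ) (hn : 0 < n) (g : ℕ → ℚ) :
    ∑ q ∈ (quad n).filter (fun q => q.1 = q.2.1), g q.1
      = ∑ d ∈ n.divisors, ((n / d - 1 : ℕ) : ℚ) * g d := by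
  have : ∑ d ∈ n.divisors, ((n / d - 1 : ℕ) : ℚ) * g d
      = ∑ p ∈ n.divisors.sigma (fun d => Finset.Ioo 0 (n / d)), g p.1 := by
    rw [Finset.sum_sigma]
    refine Finset.sum_congr rfl fun d hd => ?_
    simp [Nat.card_Ioo]
  rw [this]
  apply Finset.sum_nbij' (fun q => (⟨q.1, q.2.2.1⟩ : (_ : ℕ) × ℕ))
    (fun p => (p.1, p.1, p.2, n / p.1 - p.2))
  · rintro ⟨a, b, x, y⟩ hq
    simp only [Finset.mem_filter, mem_quad] at hq
    obtain ⟨⟨ha, hb, hx, hy, h⟩, hab⟩ := hq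
    subst hab
    have hdvd : a ∣ n := ⟨x + y, by rw [← h]; ring⟩
    have hmul : a * (x + y) = n := by rw [← h]; ring
    have hxy : n / a = x + y := by rw [← hmul, Nat.mul_div_cancel_left _ ha]
    simp only [Finset.mem_sigma, Nat.mem_divisors, Finset.mem_Ioo]
    exact ⟨⟨hdvd, by omega⟩, hx, by omega⟩
  · rintro ⟨d, x⟩ hp
    simp only [Finset.mem_sigma, Nat.mem_divisors, Finset.mem_Ioo] at hp
    obtain ⟨⟨hdvd, hn0⟩, hx0, hxlt⟩ := hp
    simp only [Finset.mem_filter, mem_quad]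
    have hd0 : 0 < d := Nat.pos_of_dvd_of_pos hdvd hn
    have hmul : d * (n / d) = n := Nat.mul_div_cancel' hdvd
    refine ⟨⟨hd0, hd0, hx0, by omega, ?_⟩, trivial⟩
    have : d * x + d * (n / d - x) = d * (n / d) := by
      have : x + (n / d - x) = n / d := by omega
      rw [← Nat.mul_add, this]
    omega
  · rintro ⟨a, b, x, y⟩ hq
    simp only [Finset.mem_filter, mem_quad] at hq
    obtain ⟨⟨ha, hb, hx, hy, h⟩, hab⟩ := hq
    subst hab
    have hmul : a * (x + y) = n := by rw [← h]; ring
    have hxy : n / a = x + y := by rw [← hmul, Nat.mul_div_cancel_left _ ha]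
    simp only [Prod.mk.injEq, and_true, true_and]
    omega
  · rintro ⟨d, x⟩ hp; rfl
  · rintro ⟨a, b, x, y⟩ hq; rfl

/-- D2: diagonal x = y, summed as divisors and splittings. -/
lemma sum_quad_diag_xy (n : ℕ) (hn : 0 < n) (g : ℕ → ℕ → ℚ) :
    ∑ q ∈ (quad n).filter (fun q => q.2.2.1 = q.2.2.2), g q.1 q.2.1
      = ∑ d ∈ n.divisors, ∑ c ∈ Finset.Ioo 0 d, g c (d - c) := by
  have : ∑ d ∈ n.divisors, ∑ c ∈ Finset.Ioo 0 d, g c (d - c)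
      = ∑ p ∈ n.divisors.sigma (fun d => Finset.Ioo 0 d), g p.2 (p.1 - p.2) := by
    rw [Finset.sum_sigma]
  rw [this]
  apply Finset.sum_nbij' (fun q => (⟨q.1 + q.2.1, q.1⟩ : (_ : ℕ) × ℕ))
    (fun p => (p.2, p.1 - p.2, n / p.1, n / p.1))
  · rintro ⟨a, b, x, y⟩ hq
    simp only [Finset.mem_filter, mem_quad] at hq
    obtain ⟨⟨ha, hb, hx, hy, h⟩, hxy⟩ := hq
    subst hxy
    have hdvd : (a + b) ∣ n := ⟨x, by rw [← h]; ring⟩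
    simp only [Finset.mem_sigma, Nat.mem_divisors, Finset.mem_Ioo]
    exact ⟨⟨hdvd, by omega⟩, ha, by omega⟩
  · rintro ⟨d, c⟩ hp
    simp only [Finset.mem_sigma, Nat.mem_divisors, Finset.mem_Ioo] at hp
    obtain ⟨⟨hdvd, hn0⟩, hc0, hclt⟩ := hp
    simp only [Finset.mem_filter, mem_quad]
    have hd0 : 0 < d := by omega
    have hmul : d * (n / d) = n := Nat.mul_div_cancel' hdvd
    have hq0 : 0 < n / d := by
      rcases Nat.eq_zero_or_pos (n / d) with h0 | h0
      · rw [h0, Nat.mul_zero] at hmul; omega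
      · exact h0
    refine ⟨⟨hc0, by omega, hq0, hq0, ?_⟩, trivial⟩
    have : c * (n / d) + (d - c) * (n / d) = d * (n / d) := by
      rw [← Nat.add_mul]; congr 1; omega
    omega
  · rintro ⟨a, b, x, y⟩ hq
    simp only [Finset.mem_filter, mem_quad] at hq
    obtain ⟨⟨ha, hb, hx, hy, h⟩, hxy⟩ := hq
    subst hxy
    have hdvd : (a + b) * x = n := by rw [← h]; ring
    have hx' : n / (a + b) = x := by
      rw [← hdvd, Nat.mul_div_cancel_left _ (by omega : 0 < a + b)]
    simp only [Prod.mk.injEq, and_true, true_and]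
    omega
  · rintro ⟨d, c⟩ hp
    simp only [Finset.mem_sigma, Nat.mem_divisors, Finset.mem_Ioo] at hp
    have hcd : c + (d - c) = d := by omega
    simp [hcd]
  · rintro ⟨a, b, x, y⟩ hq
    have : a + b - a = b := by omega
    simp [this]

/-- Convolution of divisor sums as a sum over quadruples. -/
lemma conv_quad (n' : ℕ) (f g : ℕ → ℚ) :
    ∑ i ∈ Finset.range n', (∑ a ∈ (i+1).divisors, f a) * (∑ b ∈ (n'-i).divisors, g b)
      = ∑ q ∈ quad (n'+1), f q.1 * g q.2.1 := by
  have step : ∀ i ∈ Finset.range n',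
      (∑ a ∈ (i+1).divisors, f a) * (∑ b ∈ (n'-i).divisors, g b)
        = ∑ p ∈ (i+1).divisors ×ˢ (n'-i).divisors, f p.1 * g p.2 := by
    intro i _
    rw [Finset.sum_mul_sum, Finset.sum_product]
  rw [Finset.sum_congr rfl step, ← Finset.sum_sigma (Finset.range n')
    (fun i => (i+1).divisors ×ˢ (n'-i).divisors) (fun p => f p.2.1 * g p.2.2)]
  apply Finset.sum_nbij' (fun p => (p.2.1, p.2.2, (p.1+1) / p.2.1, (n' - p.1) / p.2.2))
    (fun q => (⟨q.1 * q.2.2.1 - 1, q.1, q.2.1⟩ : (_ : ℕ) × ℕ × ℕ))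
  · rintro ⟨i, a, b⟩ hp
    simp only [Finset.mem_sigma, Finset.mem_product, Nat.mem_divisors, Finset.mem_range] at hp
    obtain ⟨hi, ⟨hai, -⟩, ⟨hbni, hni⟩⟩ := hp
    have ha0 : 0 < a := Nat.pos_of_dvd_of_pos hai (by omega)
    have hb0 : 0 < b := Nat.pos_of_dvd_of_pos hbni (by omega)
    have hax : a * ((i+1) / a) = i + 1 := Nat.mul_div_cancel' hai
    have hby : b * ((n'-i) / b) = n' - i := Nat.mul_div_cancel' hbni
    have hx0 : 0 < (i+1) / a := Nat.div_pos (Nat.le_of_dvd (by omega) hai) ha0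
    have hy0 : 0 < (n'-i) / b := Nat.div_pos (Nat.le_of_dvd (by omega) hbni) hb0
    rw [mem_quad]
    dsimp only
    refine ⟨ha0, hb0, hx0, hy0, by rw [hax, hby]; omega⟩
  · rintro ⟨a, b, x, y⟩ hq
    rw [mem_quad] at hq
    obtain ⟨ha, hb, hx, hy, h⟩ := hq
    simp only [Finset.mem_sigma, Finset.mem_product, Nat.mem_divisors, Finset.mem_range]
    have hax : 0 < a * x := Nat.mul_pos ha hx
    have hby : 0 < b * y := Nat.mul_pos hb hy
    refine ⟨by omega, ⟨⟨x, by omega⟩, by omega⟩, ⟨y, by omega⟩, by omega⟩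
  · rintro ⟨i, a, b⟩ hp
    simp only [Finset.mem_sigma, Finset.mem_product, Nat.mem_divisors, Finset.mem_range] at hp
    obtain ⟨hi, ⟨hai, -⟩, ⟨hbni, hni⟩⟩ := hp
    have hax : a * ((i+1) / a) = i + 1 := Nat.mul_div_cancel' hai
    have : a * ((i+1) / a) - 1 = i := by omega
    simp [this]
  · rintro ⟨a, b, x, y⟩ hq
    rw [mem_quad] at hq
    obtain ⟨ha, hb, hx, hy, h⟩ := hq
    have hax : 0 < a * x := Nat.mul_pos ha hx
    have hby : 0 < b * y := Nat.mul_pos hb hy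
    have h1 : a * x - 1 + 1 = a * x := by omega
    have h2 : n' - (a * x - 1) = b * y := by omega
    simp only [Prod.mk.injEq, true_and]
    rw [h1, h2, Nat.mul_div_cancel_left _ ha, Nat.mul_div_cancel_left _ hb]
    exact ⟨rfl, rfl⟩
  · rintro ⟨i, a, b⟩ hp; rfl

/-- Trichotomy split of a sum over a finset of quadruples. -/
lemma sum_trichotomy {α : Type*} (s : Finset α) (u v : α → ℕ) (f : α → ℚ) :
    ∑ q ∈ s, f q
      = ∑ q ∈ s.filter (fun q => u q < v q), f q
        + ∑ q ∈ s.filter (fun q => u q = v q), f q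
        + ∑ q ∈ s.filter (fun q => v q < u q), f q := by
  rw [← Finset.sum_filter_add_sum_filter_not s (fun q => u q < v q) f, add_assoc]
  congr 1
  rw [← Finset.sum_filter_add_sum_filter_not (s.filter fun q => ¬ u q < v q)
    (fun q => u q = v q) f, Finset.filter_filter, Finset.filter_filter]
  congr 1
  · apply Finset.sum_congr _ (fun _ _ => rfl)
    apply Finset.filter_congr
    intro q _
    constructor
    · rintro ⟨-, h⟩; exact h
    · intro h; omega
  · apply Finset.sum_congr _ (fun _ _ => rfl)
    apply Finset.filter_congr
    intro q _
    constructor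
    · rintro ⟨h1, h2⟩; omega
    · intro h; omega

lemma ps1 (d : ℕ) : ∑ c ∈ Finset.range d, (c : ℚ) = d^2/2 - d/2 := by
  induction d with
  | zero => simp
  | succ d ih => rw [Finset.sum_range_succ, ih]; push_cast; ring

lemma ps2 (d : ℕ) : ∑ c ∈ Finset.range d, (c : ℚ)^2 = d^3/3 - d^2/2 + d/6 := by
  induction d with
  | zero => simp
  | succ d ih => rw [Finset.sum_range_succ, ih]; push_cast; ring

lemma ps3 (d : ℕ) : ∑ c ∈ Finset.range d, (c : ℚ)^3 = d^4/4 - d^3/2 + d^2/4 := by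
  induction d with
  | zero => simp
  | succ d ih => rw [Finset.sum_range_succ, ih]; push_cast; ring

lemma ps4 (d : ℕ) : ∑ c ∈ Finset.range d, (c : ℚ)^4 = d^5/5 - d^4/2 + d^3/3 - d/30 := by
  induction d with
  | zero => simp
  | succ d ih => rw [Finset.sum_range_succ, ih]; push_cast; ring

lemma div_mul_pow_sum (n : ℕ) (hn : 0 < n) :
    ∑ d ∈ n.divisors, ((n / d : ℕ) : ℚ) * (d : ℚ)^4 = (n : ℚ) * sigmaQ 3 n := by
  rw [sigmaQ, Finset.mul_sum]
  refine Finset.sum_congr rfl fun d hd => ?_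
  obtain ⟨hdvd, -⟩ := Nat.mem_divisors.mp hd
  have h : ((n / d : ℕ) : ℚ) * (d : ℚ) = (n : ℚ) := by
    rw [← Nat.cast_mul, Nat.div_mul_cancel hdvd]
  calc ((n / d : ℕ) : ℚ) * (d : ℚ)^4 = (((n / d : ℕ) : ℚ) * (d : ℚ)) * (d : ℚ)^3 := by ring
    _ = (n : ℚ) * (d : ℚ)^3 := by rw [h]

lemma inner_eval (d : ℕ) (hd : 0 < d) :
    ∑ c ∈ Finset.Ioo 0 d, ((1:ℚ)/4*((d - c : ℕ) : ℚ)^4 + 1/2*(c:ℚ)*((d - c : ℕ) : ℚ)^3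
        + 3/8*(c:ℚ)^2*((d - c : ℕ) : ℚ)^2)
      = 7/80*(d:ℚ)^5 - 1/8*(d:ℚ)^4 + 1/24*(d:ℚ)^3 - 1/240*(d:ℚ) := by
  have hins : Finset.range d = insert 0 (Finset.Ioo 0 d) := by
    ext c
    simp only [Finset.mem_range, Finset.mem_insert, Finset.mem_Ioo]
    omega
  have hsum : ∑ c ∈ Finset.range d, ((1:ℚ)/4*((d - c : ℕ) : ℚ)^4 + 1/2*(c:ℚ)*((d - c : ℕ) : ℚ)^3
        + 3/8*(c:ℚ)^2*((d - c : ℕ) : ℚ)^2)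
      = (1:ℚ)/4*(d:ℚ)^4 + ∑ c ∈ Finset.Ioo 0 d, ((1:ℚ)/4*((d - c : ℕ) : ℚ)^4
        + 1/2*(c:ℚ)*((d - c : ℕ) : ℚ)^3 + 3/8*(c:ℚ)^2*((d - c : ℕ) : ℚ)^2) := by
    rw [hins, Finset.sum_insert (by simp)]
    simp
  have hexp : ∑ c ∈ Finset.range d, ((1:ℚ)/4*((d - c : ℕ) : ℚ)^4 + 1/2*(c:ℚ)*((d - c : ℕ) : ℚ)^3
        + 3/8*(c:ℚ)^2*((d - c : ℕ) : ℚ)^2)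
      = ∑ c ∈ Finset.range d, ((1:ℚ)/4*(d:ℚ)^4 - 1/2*(d:ℚ)^3*(c:ℚ) + 3/8*(d:ℚ)^2*(c:ℚ)^2
        - 1/4*(d:ℚ)*(c:ℚ)^3 + 1/8*(c:ℚ)^4) := by
    refine Finset.sum_congr rfl fun c hc => ?_
    have hcd : c ≤ d := le_of_lt (Finset.mem_range.mp hc)
    rw [Nat.cast_sub hcd]
    ring
  have hps : ∑ c ∈ Finset.range d, ((1:ℚ)/4*(d:ℚ)^4 - 1/2*(d:ℚ)^3*(c:ℚ) + 3/8*(d:ℚ)^2*(c:ℚ)^2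
        - 1/4*(d:ℚ)*(c:ℚ)^3 + 1/8*(c:ℚ)^4)
      = (1:ℚ)/4*(d:ℚ)^4*(d:ℚ) - 1/2*(d:ℚ)^3*((d:ℚ)^2/2 - (d:ℚ)/2)
        + 3/8*(d:ℚ)^2*((d:ℚ)^3/3 - (d:ℚ)^2/2 + (d:ℚ)/6)
        - 1/4*(d:ℚ)*((d:ℚ)^4/4 - (d:ℚ)^3/2 + (d:ℚ)^2/4)
        + 1/8*((d:ℚ)^5/5 - (d:ℚ)^4/2 + (d:ℚ)^3/3 - (d:ℚ)/30) := by
    simp only [Finset.sum_add_distrib, Finset.sum_sub_distrib, ← Finset.mul_sum,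
      Finset.sum_const, Finset.card_range, nsmul_eq_mul]
    rw [ps1, ps2, ps3, ps4]
    ring
  have := hsum.symm.trans (hexp.trans hps)
  linarith [this]

lemma key_identity (n : ℕ) (hn : 0 < n) :
    ∑ q ∈ quad n, (q.1 : ℚ) * (q.2.1 : ℚ)^3
      = 7/80 * sigmaQ 5 n + 1/24 * sigmaQ 3 n - 1/240 * sigmaQ 1 n
        - (n : ℚ)/8 * sigmaQ 3 n := by
  -- split the summand into two polynomial parts
  have hsplit : ∑ q ∈ quad n, (q.1 : ℚ) * (q.2.1 : ℚ)^3
      = (∑ q ∈ quad n, (-(1:ℚ)/4*(q.2.1:ℚ)^4 + 1/2*(q.1:ℚ)*(q.2.1:ℚ)^3 - 3/8*(q.1:ℚ)^2*(q.2.1:ℚ)^2))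
        + (∑ q ∈ quad n, ((1:ℚ)/4*(q.2.1:ℚ)^4 + 1/2*(q.1:ℚ)*(q.2.1:ℚ)^3 + 3/8*(q.1:ℚ)^2*(q.2.1:ℚ)^2)) := by
    rw [← Finset.sum_add_distrib]
    refine Finset.sum_congr rfl fun q _ => ?_
    ring
  -- part 1: trichotomy in (a,b)
  have h1 : ∑ q ∈ quad n, (-(1:ℚ)/4*(q.2.1:ℚ)^4 + 1/2*(q.1:ℚ)*(q.2.1:ℚ)^3 - 3/8*(q.1:ℚ)^2*(q.2.1:ℚ)^2)
      = ∑ q ∈ (quad n).filter (fun q => q.1 < q.2.1),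
          (-(1:ℚ)/4*(q.2.1:ℚ)^4 + 1/2*(q.1:ℚ)*(q.2.1:ℚ)^3 - 3/8*(q.1:ℚ)^2*(q.2.1:ℚ)^2)
        + ∑ d ∈ n.divisors, ((n / d - 1 : ℕ) : ℚ) * (-(1:ℚ)/8 * (d:ℚ)^4)
        + ∑ q ∈ (quad n).filter (fun q => q.1 < q.2.1),
          (-(1:ℚ)/4*(q.1:ℚ)^4 + 1/2*(q.2.1:ℚ)*(q.1:ℚ)^3 - 3/8*(q.2.1:ℚ)^2*(q.1:ℚ)^2) := by
    rw [sum_trichotomy (quad n) (fun q => q.1) (fun q => q.2.1)]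
    congr 1
    congr 1
    · have hdiag : ∑ q ∈ (quad n).filter (fun q => q.1 = q.2.1),
          (-(1:ℚ)/4*(q.2.1:ℚ)^4 + 1/2*(q.1:ℚ)*(q.2.1:ℚ)^3 - 3/8*(q.1:ℚ)^2*(q.2.1:ℚ)^2)
          = ∑ q ∈ (quad n).filter (fun q => q.1 = q.2.1), (-(1:ℚ)/8 * ((q.1:ℚ))^4) := by
        refine Finset.sum_congr rfl fun q hq => ?_
        have heq : q.1 = q.2.1 := (Finset.mem_filter.mp hq).2
        rw [← heq]; ring
      rw [hdiag, sum_quad_diag_ab n hn (fun t => -(1:ℚ)/8 * (t:ℚ)^4)]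
    · exact sum_quad_gt n (fun a b => -(1:ℚ)/4*(b:ℚ)^4 + 1/2*(a:ℚ)*(b:ℚ)^3 - 3/8*(a:ℚ)^2*(b:ℚ)^2)
  -- part 2: trichotomy in (x,y)
  have h2 : ∑ q ∈ quad n, ((1:ℚ)/4*(q.2.1:ℚ)^4 + 1/2*(q.1:ℚ)*(q.2.1:ℚ)^3 + 3/8*(q.1:ℚ)^2*(q.2.1:ℚ)^2)
      = ∑ q ∈ (quad n).filter (fun q => q.1 < q.2.1),
          ((1:ℚ)/4*((q.1:ℚ))^4 + 1/2*((q.2.1 - q.1 : ℕ):ℚ)*((q.1:ℚ))^3 + 3/8*((q.2.1 - q.1 : ℕ):ℚ)^2*((q.1:ℚ))^2)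
        + ∑ d ∈ n.divisors, ∑ c ∈ Finset.Ioo 0 d,
            ((1:ℚ)/4*((d - c : ℕ):ℚ)^4 + 1/2*(c:ℚ)*((d - c : ℕ):ℚ)^3 + 3/8*(c:ℚ)^2*((d - c : ℕ):ℚ)^2)
        + ∑ q ∈ (quad n).filter (fun q => q.1 < q.2.1),
            ((1:ℚ)/4*((q.2.1 - q.1 : ℕ):ℚ)^4 + 1/2*((q.1:ℚ))*((q.2.1 - q.1 : ℕ):ℚ)^3
              + 3/8*((q.1:ℚ))^2*((q.2.1 - q.1 : ℕ):ℚ)^2) := by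
    rw [sum_trichotomy (quad n) (fun q => q.2.2.1) (fun q => q.2.2.2)]
    congr 1
    congr 1
    · exact sum_quad_lt_xy n (fun a b => (1:ℚ)/4*(b:ℚ)^4 + 1/2*(a:ℚ)*(b:ℚ)^3 + 3/8*(a:ℚ)^2*(b:ℚ)^2)
    · have hdiag : ∑ q ∈ (quad n).filter (fun q => q.2.2.1 = q.2.2.2),
          ((1:ℚ)/4*(q.2.1:ℚ)^4 + 1/2*(q.1:ℚ)*(q.2.1:ℚ)^3 + 3/8*(q.1:ℚ)^2*(q.2.1:ℚ)^2)
          = ∑ d ∈ n.divisors, ∑ c ∈ Finset.Ioo 0 d,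
            ((1:ℚ)/4*((d - c : ℕ):ℚ)^4 + 1/2*(c:ℚ)*((d - c : ℕ):ℚ)^3 + 3/8*(c:ℚ)^2*((d - c : ℕ):ℚ)^2) :=
        sum_quad_diag_xy n hn (fun a b => (1:ℚ)/4*(b:ℚ)^4 + 1/2*(a:ℚ)*(b:ℚ)^3 + 3/8*(a:ℚ)^2*(b:ℚ)^2)
      exact hdiag
    · exact sum_quad_engine n (fun a b => (1:ℚ)/4*(b:ℚ)^4 + 1/2*(a:ℚ)*(b:ℚ)^3 + 3/8*(a:ℚ)^2*(b:ℚ)^2)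
  -- the four off-diagonal sums cancel
  have hcancel : ∀ q ∈ (quad n).filter (fun q => q.1 < q.2.1),
      (-(1:ℚ)/4*(q.2.1:ℚ)^4 + 1/2*(q.1:ℚ)*(q.2.1:ℚ)^3 - 3/8*(q.1:ℚ)^2*(q.2.1:ℚ)^2)
      + (-(1:ℚ)/4*(q.1:ℚ)^4 + 1/2*(q.2.1:ℚ)*(q.1:ℚ)^3 - 3/8*(q.2.1:ℚ)^2*(q.1:ℚ)^2)
      + ((1:ℚ)/4*((q.1:ℚ))^4 + 1/2*((q.2.1 - q.1 : ℕ):ℚ)*((q.1:ℚ))^3 + 3/8*((q.2.1 - q.1 : ℕ):ℚ)^2*((q.1:ℚ))^2)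
      + ((1:ℚ)/4*((q.2.1 - q.1 : ℕ):ℚ)^4 + 1/2*((q.1:ℚ))*((q.2.1 - q.1 : ℕ):ℚ)^3
          + 3/8*((q.1:ℚ))^2*((q.2.1 - q.1 : ℕ):ℚ)^2) = 0 := by
    intro q hq
    have hab : q.1 < q.2.1 := (Finset.mem_filter.mp hq).2
    rw [Nat.cast_sub hab.le]
    ring
  -- evaluate diagonal 1
  have hD1 : ∑ d ∈ n.divisors, ((n / d - 1 : ℕ) : ℚ) * (-(1:ℚ)/8 * (d:ℚ)^4)
      = -(n:ℚ)/8 * sigmaQ 3 n + 1/8 * sigmaQ 4 n := by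
    have hstep : ∀ d ∈ n.divisors, ((n / d - 1 : ℕ) : ℚ) * (-(1:ℚ)/8 * (d:ℚ)^4)
        = -(1:ℚ)/8 * (((n / d : ℕ) : ℚ) * (d:ℚ)^4) + 1/8 * (d:ℚ)^4 := by
      intro d hd
      obtain ⟨hdvd, hn0⟩ := Nat.mem_divisors.mp hd
      have h1 : 1 ≤ n / d := (Nat.one_le_div_iff (Nat.pos_of_dvd_of_pos hdvd hn)).mpr
        (Nat.le_of_dvd hn hdvd)
      rw [Nat.cast_sub h1]
      push_cast
      ring
    rw [Finset.sum_congr rfl hstep, Finset.sum_add_distrib, ← Finset.mul_sum, ← Finset.mul_sum,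
      div_mul_pow_sum n hn]
    simp only [sigmaQ]
    ring
  -- evaluate diagonal 2
  have hD2 : ∑ d ∈ n.divisors, ∑ c ∈ Finset.Ioo 0 d,
        ((1:ℚ)/4*((d - c : ℕ):ℚ)^4 + 1/2*(c:ℚ)*((d - c : ℕ):ℚ)^3 + 3/8*(c:ℚ)^2*((d - c : ℕ):ℚ)^2)
      = 7/80 * sigmaQ 5 n - 1/8 * sigmaQ 4 n + 1/24 * sigmaQ 3 n - 1/240 * sigmaQ 1 n := by
    have hstep : ∀ d ∈ n.divisors, ∑ c ∈ Finset.Ioo 0 d,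
        ((1:ℚ)/4*((d - c : ℕ):ℚ)^4 + 1/2*(c:ℚ)*((d - c : ℕ):ℚ)^3 + 3/8*(c:ℚ)^2*((d - c : ℕ):ℚ)^2)
        = 7/80*(d:ℚ)^5 - 1/8*(d:ℚ)^4 + 1/24*(d:ℚ)^3 - 1/240*(d:ℚ) := by
      intro d hd
      exact inner_eval d (Nat.pos_of_mem_divisors hd)
    rw [Finset.sum_congr rfl hstep]
    simp only [Finset.sum_add_distrib, Finset.sum_sub_distrib, ← Finset.mul_sum]
    simp only [sigmaQ]
    have : ∑ d ∈ n.divisors, (d:ℚ) = ∑ d ∈ n.divisors, (d:ℚ)^1 := by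
      refine Finset.sum_congr rfl fun d _ => ?_; ring
    rw [this]
    try ring
  -- assemble
  rw [hsplit, h1, h2]
  have hzero : ∑ q ∈ (quad n).filter (fun q => q.1 < q.2.1),
      (-(1:ℚ)/4*(q.2.1:ℚ)^4 + 1/2*(q.1:ℚ)*(q.2.1:ℚ)^3 - 3/8*(q.1:ℚ)^2*(q.2.1:ℚ)^2)
      + ∑ q ∈ (quad n).filter (fun q => q.1 < q.2.1),
      (-(1:ℚ)/4*(q.1:ℚ)^4 + 1/2*(q.2.1:ℚ)*(q.1:ℚ)^3 - 3/8*(q.2.1:ℚ)^2*(q.1:ℚ)^2)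
      + ∑ q ∈ (quad n).filter (fun q => q.1 < q.2.1),
      ((1:ℚ)/4*((q.1:ℚ))^4 + 1/2*((q.2.1 - q.1 : ℕ):ℚ)*((q.1:ℚ))^3 + 3/8*((q.2.1 - q.1 : ℕ):ℚ)^2*((q.1:ℚ))^2)
      + ∑ q ∈ (quad n).filter (fun q => q.1 < q.2.1),
      ((1:ℚ)/4*((q.2.1 - q.1 : ℕ):ℚ)^4 + 1/2*((q.1:ℚ))*((q.2.1 - q.1 : ℕ):ℚ)^3
          + 3/8*((q.1:ℚ))^2*((q.2.1 - q.1 : ℕ):ℚ)^2) = 0 := by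
    rw [← Finset.sum_add_distrib, ← Finset.sum_add_distrib, ← Finset.sum_add_distrib]
    exact Finset.sum_eq_zero hcancel
  rw [hD1, hD2]
  linarith [hzero]

lemma sigmaQ_zero (r : ℕ) : sigmaQ r 0 = 0 := by simp [sigmaQ]

theorem three_theta_E4 : 3 * theta E4 = E2 * E4 - E6 := by
  ext n
  rw [show (3 : PowerSeries ℚ) = PowerSeries.C (3 : ℚ) from (map_ofNat (PowerSeries.C (R := ℚ)) 3).symm]
  rw [PowerSeries.coeff_C_mul, map_sub, PowerSeries.coeff_mul]
  rw [theta, PowerSeries.coeff_mk]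
  rcases Nat.eq_zero_or_pos n with rfl | hn
  · simp [E2, E4, E6, PowerSeries.coeff_mk]
  obtain ⟨m, rfl⟩ : ∃ m, n = m + 1 := ⟨n - 1, by omega⟩
  -- expand the convolution
  rw [Finset.Nat.sum_antidiagonal_eq_sum_range_succ_mk, Finset.sum_range_succ,
    Finset.sum_range_succ']
  have hmid : ∀ i ∈ Finset.range m,
      (PowerSeries.coeff (i+1)) E2 * (PowerSeries.coeff (m + 1 - (i+1))) E4
        = (-24 * sigmaQ 1 (i+1)) * (240 * sigmaQ 3 (m - i)) := by
    intro i hi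
    have him : i < m := Finset.mem_range.mp hi
    have h1 : m + 1 - (i + 1) = m - i := by omega
    have h2 : m - i ≠ 0 := by omega
    rw [h1, E2, E4, PowerSeries.coeff_mk, PowerSeries.coeff_mk, if_neg (by omega), if_neg h2]
  rw [Finset.sum_congr rfl hmid]
  have hconv : ∑ i ∈ Finset.range m, (-24 * sigmaQ 1 (i+1)) * (240 * sigmaQ 3 (m - i))
      = -5760 * ∑ q ∈ quad (m+1), (q.1 : ℚ) * (q.2.1 : ℚ)^3 := by
    rw [← conv_quad m (fun a => (a : ℚ)) (fun b => (b : ℚ)^3), Finset.mul_sum]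
    refine Finset.sum_congr rfl fun i hi => ?_
    have : sigmaQ 1 (i+1) = ∑ a ∈ (i+1).divisors, (a : ℚ) := by
      rw [sigmaQ]; refine Finset.sum_congr rfl fun a _ => ?_; ring
    rw [this, sigmaQ]
    ring
  rw [hconv, key_identity (m+1) (Nat.succ_pos m)]
  -- boundary terms
  simp only [E2, E4, E6, PowerSeries.coeff_mk, Nat.add_sub_cancel_left, Nat.sub_zero,
    Nat.sub_self, Nat.succ_ne_zero, Nat.add_one_ne_zero, if_false, if_true, reduceIte]
  push_cast
  ring
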